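/- Let n ≥ 1 and let F₁,…,F_n and G₁,…,G_n be functions ℝ → ℝ that are differentiable and strictly positive everywhere. Let q : {1,…,n} → ℝ be nonnegative with Σ_{m=1}^n q(m) = 1. Assume that for all x ∈ ℝ: (a) for each m = 1,…,n−1, G_m′(x)/G_m(x) ≤ G_{m+1}′(x)/G_{m+1}(x); (b) for each m = 1,…,n−1, F_m(x)/G_m(x) ≤ F_{m+1}(x)/G_{m+1}(x); (c) for each m = 1,…,n, F_m′(x)/F_m(x) ≥ G_m′(x)/G_m(x). Then for all x ∈ ℝ: (Σ_{m=1}^n q(m)·F_m′(x))·(Σ_{m=1}^n q(m)·G_m(x)) ≥ (Σ_{m=1}^n q(m)·G_m′(x))·(Σ_{m=1}^n q(m)·F_m(x)), i.e. the reversed hazard rate of the q-mixture of the F_m dominates that of the q-mixture of the G_m. -/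

import Mathlib

open Finset

private lemma step_mono {n : ℕ} (f : ℕ → ℝ)
    (h : ∀ m, 1 ≤ m → m < n → f m ≤ f (m + 1)) :
    ∀ i j, 1 ≤ i → i ≤ j → j ≤ n → f i ≤ f j := by
  intro i j hi hij hjn
  induction j with
  | zero => omega
  | succ k ih =>
    rcases Nat.lt_or_ge i (k + 1) with h' | h'
    · exact (ih (by omega) (by omega)).trans (h k (by omega) (by omega))
    · have : i = k + 1 := by omega
      simp [this]

private lemma weighted_cheb {ι : Type*} (s : Finset ι) (a r t : ι → ℝ)
    (ha : ∀ i ∈ s, 0 ≤ a i)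
    (hm : ∀ i ∈ s, ∀ j ∈ s, 0 ≤ (r i - r j) * (t i - t j)) :
    (∑ i ∈ s, a i * r i) * (∑ i ∈ s, a i * t i) ≤
      (∑ i ∈ s, a i) * (∑ i ∈ s, a i * r i * t i) := by
  have h1 : 0 ≤ ∑ i ∈ s, ∑ j ∈ s, a i * a j * ((r i - r j) * (t i - t j)) := by
    refine Finset.sum_nonneg fun i hi => Finset.sum_nonneg fun j hj => ?_
    exact mul_nonneg (mul_nonneg (ha i hi) (ha j hj)) (hm i hi j hj)
  have h2 : ∑ i ∈ s, ∑ j ∈ s, a i * a j * ((r i - r j) * (t i - t j))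
      = 2 * ((∑ i ∈ s, a i) * (∑ i ∈ s, a i * r i * t i)
           - (∑ i ∈ s, a i * r i) * (∑ i ∈ s, a i * t i)) := by
    have key : ∀ i ∈ s, ∑ j ∈ s, a i * a j * ((r i - r j) * (t i - t j))
        = a i * r i * t i * (∑ j ∈ s, a j) + a i * (∑ j ∈ s, a j * r j * t j)
          - a i * r i * (∑ j ∈ s, a j * t j) - a i * t i * (∑ j ∈ s, a j * r j) := by
      intro i hi
      simp only [Finset.mul_sum]
      rw [← Finset.sum_add_distrib, ← Finset.sum_sub_distrib, ← Finset.sum_sub_distrib]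
      exact Finset.sum_congr rfl fun j hj => by ring
    rw [Finset.sum_congr rfl key]
    rw [Finset.sum_sub_distrib, Finset.sum_sub_distrib, Finset.sum_add_distrib,
      ← Finset.sum_mul, ← Finset.sum_mul, ← Finset.sum_mul, ← Finset.sum_mul]
    ring
  linarith

/-- Theorem 3.15: preservation of the reversed hazard rate order under
random minima. -/
theorem stmt_15 {n : ℕ} (hn : 1 ≤ n) (F G F' G' : ℕ → ℝ → ℝ)
    (hF_pos : ∀ m ∈ Finset.Icc 1 n, ∀ x : ℝ, 0 < F m x)
    (hG_pos : ∀ m ∈ Finset.Icc 1 n, ∀ x : ℝ, 0 < G m x)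
    (hF' : ∀ m ∈ Finset.Icc 1 n, ∀ x : ℝ, HasDerivAt (F m) (F' m x) x)
    (hG' : ∀ m ∈ Finset.Icc 1 n, ∀ x : ℝ, HasDerivAt (G m) (G' m x) x)
    (q : ℕ → ℝ)
    (hq : ∀ m ∈ Finset.Icc 1 n, 0 ≤ q m)
    (hqsum : ∑ m ∈ Finset.Icc 1 n, q m = 1)
    (ha : ∀ x : ℝ, ∀ m, 1 ≤ m → m < n →
      G' m x / G m x ≤ G' (m + 1) x / G (m + 1) x)
    (hb : ∀ x : ℝ, ∀ m, 1 ≤ m → m < n →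
      F m x / G m x ≤ F (m + 1) x / G (m + 1) x)
    (hc : ∀ x : ℝ, ∀ m ∈ Finset.Icc 1 n, G' m x / G m x ≤ F' m x / F m x) :
    ∀ x : ℝ,
      (∑ m ∈ Finset.Icc 1 n, q m * G' m x) * (∑ m ∈ Finset.Icc 1 n, q m * F m x) ≤
        (∑ m ∈ Finset.Icc 1 n, q m * F' m x) * (∑ m ∈ Finset.Icc 1 n, q m * G m x) := by
  intro x
  set a : ℕ → ℝ := fun m => q m * G m x with ha_def
  set r : ℕ → ℝ := fun m => G' m x / G m x with hr_def
  set t : ℕ → ℝ := fun m => F m x / G m x with ht_def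
  have hGne : ∀ m ∈ Finset.Icc 1 n, G m x ≠ 0 := fun m hm => (hG_pos m hm x).ne'
  have hFne : ∀ m ∈ Finset.Icc 1 n, F m x ≠ 0 := fun m hm => (hF_pos m hm x).ne'
  have hanon : ∀ m ∈ Finset.Icc 1 n, 0 ≤ a m := fun m hm =>
    mul_nonneg (hq m hm) (hG_pos m hm x).le
  -- rewrite the sums
  have e1 : ∑ m ∈ Finset.Icc 1 n, q m * G' m x = ∑ m ∈ Finset.Icc 1 n, a m * r m := by
    refine Finset.sum_congr rfl fun m hm => ?_
    simp only [ha_def, hr_def]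
    field_simp [hGne m hm]
  have e2 : ∑ m ∈ Finset.Icc 1 n, q m * F m x = ∑ m ∈ Finset.Icc 1 n, a m * t m := by
    refine Finset.sum_congr rfl fun m hm => ?_
    simp only [ha_def, ht_def]
    field_simp [hGne m hm]
  -- monotonicity facts on Icc 1 n
  have hrmono := step_mono (n := n) r (fun m h1 h2 => ha x m h1 h2)
  have htmono := step_mono (n := n) t (fun m h1 h2 => hb x m h1 h2)
  have hmono : ∀ i ∈ Finset.Icc 1 n, ∀ j ∈ Finset.Icc 1 n,
      0 ≤ (r i - r j) * (t i - t j) := by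
    intro i hi j hj
    simp only [Finset.mem_Icc] at hi hj
    rcases le_total i j with hij | hij
    · have h1 := hrmono i j hi.1 hij hj.2
      have h2 := htmono i j hi.1 hij hj.2
      nlinarith
    · have h1 := hrmono j i hj.1 hij hi.2
      have h2 := htmono j i hj.1 hij hi.2
      exact mul_nonneg (by linarith) (by linarith)
  have cheb := weighted_cheb (Finset.Icc 1 n) a r t hanon hmono
  -- ∑ q F' ≥ ∑ a r t
  have e3 : ∑ m ∈ Finset.Icc 1 n, a m * r m * t m ≤ ∑ m ∈ Finset.Icc 1 n, q m * F' m x := by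
    refine Finset.sum_le_sum fun m hm => ?_
    have hc' := hc x m hm
    have hFp := hF_pos m hm x
    have hGp := hG_pos m hm x
    have hqm := hq m hm
    have : a m * r m * t m = q m * F m x * (G' m x / G m x) := by
      simp only [ha_def, hr_def, ht_def]
      field_simp [hGne m hm]
    rw [this]
    have h4 : q m * F m x * (G' m x / G m x) ≤ q m * F m x * (F' m x / F m x) := by
      exact mul_le_mul_of_nonneg_left hc' (mul_nonneg hqm hFp.le)
    have h5 : q m * F m x * (F' m x / F m x) = q m * F' m x := by
      field_simp [hFne m hm]
    linarith
  have hAnn : 0 ≤ ∑ m ∈ Finset.Icc 1 n, a m := Finset.sum_nonneg hanon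
  have e4 : ∑ m ∈ Finset.Icc 1 n, a m = ∑ m ∈ Finset.Icc 1 n, q m * G m x := rfl
  rw [e1, e2]
  calc (∑ m ∈ Finset.Icc 1 n, a m * r m) * (∑ m ∈ Finset.Icc 1 n, a m * t m)
      ≤ (∑ m ∈ Finset.Icc 1 n, a m) * (∑ m ∈ Finset.Icc 1 n, a m * r m * t m) := cheb
    _ ≤ (∑ m ∈ Finset.Icc 1 n, a m) * (∑ m ∈ Finset.Icc 1 n, q m * F' m x) :=
        mul_le_mul_of_nonneg_left e3 hAnn
    _ = (∑ m ∈ Finset.Icc 1 n, q m * F' m x) * (∑ m ∈ Finset.Icc 1 n, q m * G m x) := by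
        rw [e4]; ring
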